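/- Let H be a real Hilbert space, C a nonempty closed convex subset of H, α > 0, and A : C → H an α-inverse strongly monotone mapping. Let {W_n} be a sequence of nonexpansive self-mappings of C, and let z ∈ C be a common fixed point of all W_n that also solves the variational inequality VI(C,A). Let {λ_n} ⊂ [a,b] with 0 < a ≤ b < 2α and {α_n} ⊂ [c,d] with 0 < c ≤ d < 1, and define, starting from x_0 ∈ C: t_n = P_C(x_n − λ_n A x_n), y_n = (1 − α_n)x_n + α_n W_n t_n, and x_{n+1} = W_n P_C(y_n − λ_n A y_n). Then ‖x_n − t_n‖ → 0 and ‖W_n x_n − x_n‖ → 0 as n → ∞. -/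

import Mathlib

open Filter Topology RealInnerProductSpace

section Aux
variable {H : Type*} [NormedAddCommGroup H] [InnerProductSpace ℝ H]

lemma stmt6_convex_id (s : ℝ) (u v : H) :
    ‖(1-s)•u + s•v‖^2 = (1-s)*‖u‖^2 + s*‖v‖^2 - s*(1-s)*‖u-v‖^2 := by
  rw [norm_add_sq_real, norm_sub_sq_real, norm_smul, norm_smul, real_inner_smul_left,
    real_inner_smul_right]
  simp [Real.norm_eq_abs, mul_pow, sq_abs]
  ring

lemma stmt6_firm (C : Set H) (P : H → H) (hPmem : ∀ x, P x ∈ C)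
    (hPchar : ∀ x, ∀ y ∈ C, ⟪x - P x, y - P x⟫ ≤ 0) (u v : H) :
    ‖P u - P v‖^2 ≤ ⟪u - v, P u - P v⟫ := by
  have h1 := hPchar u (P v) (hPmem v)
  have h2 := hPchar v (P u) (hPmem u)
  have key : ‖P u - P v‖^2 - ⟪u - v, P u - P v⟫
      = ⟪u - P u, P v - P u⟫ + ⟪v - P v, P u - P v⟫ := by
    simp only [inner_sub_left, inner_sub_right, ← real_inner_self_eq_norm_sq]
    rw [real_inner_comm (P v) (P u)]
    ring
  linarith

lemma stmt6_nonexp (C : Set H) (P : H → H) (hPmem : ∀ x, P x ∈ C)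
    (hPchar : ∀ x, ∀ y ∈ C, ⟪x - P x, y - P x⟫ ≤ 0) (u v : H) :
    ‖P u - P v‖ ≤ ‖u - v‖ := by
  have h1 := stmt6_firm C P hPmem hPchar u v
  have h2 := real_inner_le_norm (u - v) (P u - P v)
  nlinarith [norm_nonneg (P u - P v), norm_nonneg (u - v)]

lemma stmt6_ism (C : Set H) (α : ℝ) (A : H → H)
    (hA : ∀ x ∈ C, ∀ y ∈ C, α * ‖A x - A y‖ ^ 2 ≤ ⟪A x - A y, x - y⟫)
    (u : H) (hu : u ∈ C) (v : H) (hv : v ∈ C) (l : ℝ) (hl : 0 ≤ l) :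
    ‖(u - l • A u) - (v - l • A v)‖^2 ≤ ‖u - v‖^2 + l*(l - 2*α)*‖A u - A v‖^2 := by
  have h := hA u hu v hv
  have e : (u - l • A u) - (v - l • A v) = (u - v) - l • (A u - A v) := by
    rw [smul_sub]; abel
  rw [e, norm_sub_sq_real, real_inner_smul_right, norm_smul, Real.norm_eq_abs, mul_pow, sq_abs,
    real_inner_comm]
  nlinarith

end Aux

set_option maxHeartbeats 1600000 in
/-- For the new extragradient iteration, `‖xₙ - tₙ‖ → 0` and `‖Wₙxₙ - xₙ‖ → 0`. -/
theorem stmt_6 {H : Type*} [NormedAddCommGroup H] [InnerProductSpace ℝ H] [CompleteSpace H]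
    (C : Set H) (hC : C.Nonempty) (hCclosed : IsClosed C) (hCconvex : Convex ℝ C)
    (α : ℝ) (hα : 0 < α) (A : H → H)
    (hA : ∀ x ∈ C, ∀ y ∈ C, α * ‖A x - A y‖ ^ 2 ≤ ⟪A x - A y, x - y⟫)
    (P : H → H) (hPmem : ∀ x, P x ∈ C)
    (hPchar : ∀ x, ∀ y ∈ C, ⟪x - P x, y - P x⟫ ≤ 0)
    (W : ℕ → H → H) (hWmap : ∀ n, ∀ x ∈ C, W n x ∈ C)
    (hWne : ∀ n, ∀ x ∈ C, ∀ y ∈ C, ‖W n x - W n y‖ ≤ ‖x - y‖)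
    (z : H) (hz : z ∈ C) (hzfix : ∀ n, W n z = z)
    (hzsol : ∀ y ∈ C, 0 ≤ ⟪A z, y - z⟫)
    (a b c d : ℝ) (ha : 0 < a) (hab : a ≤ b) (hb : b < 2 * α)
    (hc : 0 < c) (hcd : c ≤ d) (hd : d < 1)
    (lam αn : ℕ → ℝ) (hlam : ∀ n, lam n ∈ Set.Icc a b) (hαn : ∀ n, αn n ∈ Set.Icc c d)
    (x y t : ℕ → H) (hx0 : x 0 ∈ C)
    (ht : ∀ n, t n = P (x n - lam n • A (x n)))
    (hy : ∀ n, y n = (1 - αn n) • x n + αn n • W n (t n))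
    (hx : ∀ n, x (n + 1) = W n (P (y n - lam n • A (y n)))) :
    Tendsto (fun n => ‖x n - t n‖) atTop (𝓝 0) ∧
      Tendsto (fun n => ‖W n (x n) - x n‖) atTop (𝓝 0) := by
  have hlam0 : ∀ n, (0:ℝ) ≤ lam n := fun n => le_trans ha.le (hlam n).1
  have hαn0 : ∀ n, (0:ℝ) ≤ αn n := fun n => le_trans hc.le (hαn n).1
  have hαn1 : ∀ n, αn n ≤ 1 := fun n => le_trans (hαn n).2 hd.le
  -- memberships
  have hxC : ∀ n, x n ∈ C := by
    intro n
    induction n with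
    | zero => exact hx0
    | succ k _ => rw [hx]; exact hWmap _ _ (hPmem _)
  have htC : ∀ n, t n ∈ C := fun n => by rw [ht]; exact hPmem _
  have hWtC : ∀ n, W n (t n) ∈ C := fun n => hWmap n _ (htC n)
  have hyC : ∀ n, y n ∈ C := fun n => by
    rw [hy]
    exact hCconvex (hxC n) (hWtC n) (by linarith [(hαn n).2]) (hαn0 n) (by ring)
  -- z is a fixed point of the projected gradient map
  have hzP : ∀ l : ℝ, 0 ≤ l → P (z - l • A z) = z := by
    intro l hl
    set w := P (z - l • A z) with hw
    have h1 := hPchar (z - l • A z) z hz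
    have h2 := hzsol w (hPmem _)
    have e1 : z - l • A z - w = (z - w) - l • A z := by abel
    rw [e1, inner_sub_left, real_inner_smul_left, real_inner_self_eq_norm_sq] at h1
    have e2 : ⟪A z, z - w⟫ = -⟪A z, w - z⟫ := by
      rw [show z - w = -(w - z) from by abel, inner_neg_right]
    rw [e2] at h1
    have h3 : 0 ≤ l * ⟪A z, w - z⟫ := mul_nonneg hl h2
    have h4 : ‖z - w‖ = 0 := by nlinarith [norm_nonneg (z - w)]
    have : z - w = 0 := norm_eq_zero.mp h4
    have : z = w := by rwa [sub_eq_zero] at this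
    exact this.symm
  -- Step A
  have hAt : ∀ n, ‖t n - z‖^2 ≤ ‖x n - z‖^2 + lam n * (lam n - 2*α) * ‖A (x n) - A z‖^2 := by
    intro n
    have h1 : ‖t n - z‖ ≤ ‖(x n - lam n • A (x n)) - (z - lam n • A z)‖ := by
      have := stmt6_nonexp C P hPmem hPchar (x n - lam n • A (x n)) (z - lam n • A z)
      rwa [hzP (lam n) (hlam0 n), ← ht n] at this
    calc ‖t n - z‖^2 ≤ ‖(x n - lam n • A (x n)) - (z - lam n • A z)‖^2 :=
          pow_le_pow_left₀ (norm_nonneg _) h1 2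
      _ ≤ _ := stmt6_ism C α A hA (x n) (hxC n) z hz (lam n) (hlam0 n)
  have hco : ∀ n, lam n * (lam n - 2*α) ≤ 0 := fun n =>
    mul_nonpos_of_nonneg_of_nonpos (hlam0 n) (by linarith [(hlam n).2])
  have htz : ∀ n, ‖t n - z‖ ≤ ‖x n - z‖ := by
    intro n
    have h1 := hAt n
    have h2 : lam n * (lam n - 2*α) * ‖A (x n) - A z‖^2 ≤ 0 :=
      mul_nonpos_of_nonpos_of_nonneg (hco n) (sq_nonneg _)
    nlinarith [norm_nonneg (t n - z), norm_nonneg (x n - z)]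
  -- Step B
  have hyb : ∀ n, ‖y n - z‖^2 = (1 - αn n)*‖x n - z‖^2 + (αn n)*‖W n (t n) - z‖^2
      - (αn n)*(1 - αn n)*‖x n - W n (t n)‖^2 := by
    intro n
    have e : y n - z = (1 - αn n) • (x n - z) + (αn n) • (W n (t n) - z) := by
      rw [hy n]; module
    rw [e, stmt6_convex_id, show (x n - z) - (W n (t n) - z) = x n - W n (t n) from by abel]
  -- Step C
  have hWt : ∀ n, ‖W n (t n) - z‖ ≤ ‖t n - z‖ := fun n => by
    have := hWne n (t n) (htC n) z hz
    rwa [hzfix n] at this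
  -- Step D
  have hsucc : ∀ n, ‖x (n+1) - z‖^2 ≤ ‖y n - z‖^2 := by
    intro n
    have h1 : ‖x (n+1) - z‖ ≤ ‖P (y n - lam n • A (y n)) - z‖ := by
      rw [hx n]
      calc ‖W n (P (y n - lam n • A (y n))) - z‖
          = ‖W n (P (y n - lam n • A (y n))) - W n z‖ := by rw [hzfix n]
        _ ≤ _ := hWne n _ (hPmem _) z hz
    have h2 : ‖P (y n - lam n • A (y n)) - z‖ ≤ ‖(y n - lam n • A (y n)) - (z - lam n • A z)‖ := by
      have := stmt6_nonexp C P hPmem hPchar (y n - lam n • A (y n)) (z - lam n • A z)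
      rwa [hzP (lam n) (hlam0 n)] at this
    have h3 := stmt6_ism C α A hA (y n) (hyC n) z hz (lam n) (hlam0 n)
    have h4 : lam n * (lam n - 2*α) * ‖A (y n) - A z‖^2 ≤ 0 :=
      mul_nonpos_of_nonpos_of_nonneg (hco n) (sq_nonneg _)
    have h5 : ‖x (n+1) - z‖ ≤ ‖(y n - lam n • A (y n)) - (z - lam n • A z)‖ := h1.trans h2
    have h6 := pow_le_pow_left₀ (norm_nonneg _) h5 2
    linarith
  -- master inequality 1
  have key1 : ∀ n, ‖x (n+1) - z‖^2 ≤ ‖x n - z‖^2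
      + (αn n)*(lam n * (lam n - 2*α) * ‖A (x n) - A z‖^2)
      - (αn n)*(1 - αn n)*‖x n - W n (t n)‖^2 := by
    intro n
    have h4 : (αn n) * ‖W n (t n) - z‖^2
        ≤ (αn n)*(‖x n - z‖^2 + lam n * (lam n - 2*α) * ‖A (x n) - A z‖^2) := by
      apply mul_le_mul_of_nonneg_left _ (hαn0 n)
      exact le_trans (pow_le_pow_left₀ (norm_nonneg _) (hWt n) 2) (hAt n)
    have hB := hyb n
    have hD := hsucc n
    nlinarith [hB, hD, h4]
  -- positive constants
  set K1 : ℝ := c*(a*(2*α - b)) with hK1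
  set K2 : ℝ := c*(1 - d) with hK2
  have hK1pos : 0 < K1 := mul_pos hc (mul_pos ha (by linarith))
  have hK2pos : 0 < K2 := mul_pos hc (by linarith)
  have key1' : ∀ n, K1 * ‖A (x n) - A z‖^2 + K2 * ‖x n - W n (t n)‖^2
      ≤ ‖x n - z‖^2 - ‖x (n+1) - z‖^2 := by
    intro n
    obtain ⟨hαl, hαu⟩ := hαn n
    obtain ⟨hll, hlu⟩ := hlam n
    have h1 : a * (2*α - b) ≤ lam n * (2*α - lam n) := by
      nlinarith [mul_nonneg (sub_nonneg.mpr hll) (show (0:ℝ) ≤ 2*α - lam n by linarith),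
        mul_nonneg ha.le (show (0:ℝ) ≤ b - lam n by linarith)]
    have hcoef1 : K1 ≤ (αn n) * (lam n * (2*α - lam n)) := by
      calc K1 ≤ c * (lam n * (2*α - lam n)) := mul_le_mul_of_nonneg_left h1 hc.le
        _ ≤ (αn n) * (lam n * (2*α - lam n)) := by
            apply mul_le_mul_of_nonneg_right hαl
            nlinarith
    have h5 : K1 * ‖A (x n) - A z‖^2
        ≤ (αn n) * (lam n * (2*α - lam n)) * ‖A (x n) - A z‖^2 :=
      mul_le_mul_of_nonneg_right hcoef1 (sq_nonneg _)
    have h6 : (αn n) * (lam n * (2*α - lam n)) * ‖A (x n) - A z‖^2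
        = -((αn n)*(lam n * (lam n - 2*α) * ‖A (x n) - A z‖^2)) := by ring
    have hcoef2 : K2 ≤ (αn n) * (1 - αn n) := by
      rw [hK2]
      nlinarith [mul_nonneg (sub_nonneg.mpr hαl) (show (0:ℝ) ≤ 1 - αn n by linarith),
        mul_nonneg hc.le (show (0:ℝ) ≤ d - αn n by linarith)]
    have h7 : K2 * ‖x n - W n (t n)‖^2 ≤ (αn n)*(1 - αn n)*‖x n - W n (t n)‖^2 :=
      mul_le_mul_of_nonneg_right hcoef2 (sq_nonneg _)
    have hk := key1 n
    rw [h6] at h5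
    linarith
  have hanti : Antitone (fun n => ‖x n - z‖^2) := by
    apply antitone_nat_of_succ_le
    intro n
    have := key1' n
    nlinarith [mul_nonneg hK1pos.le (sq_nonneg ‖A (x n) - A z‖),
      mul_nonneg hK2pos.le (sq_nonneg ‖x n - W n (t n)‖)]
  have hbdd : BddBelow (Set.range (fun n => ‖x n - z‖^2)) := by
    refine ⟨0, ?_⟩
    rintro v ⟨n, rfl⟩
    exact sq_nonneg _
  have hconv : Tendsto (fun n => ‖x n - z‖^2) atTop (𝓝 (⨅ n, ‖x n - z‖^2)) :=
    tendsto_atTop_ciInf hanti hbdd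
  have hconv' : Tendsto (fun n => ‖x (n+1) - z‖^2) atTop (𝓝 (⨅ n, ‖x n - z‖^2)) := by
    have := hconv.comp (tendsto_add_atTop_nat 1)
    simpa [Function.comp_def] using this
  have hdiff : Tendsto (fun n => ‖x n - z‖^2 - ‖x (n+1) - z‖^2) atTop (𝓝 0) := by
    have := hconv.sub hconv'
    simpa using this
  -- g → 0
  have hgten : Tendsto (fun n => ‖A (x n) - A z‖^2) atTop (𝓝 0) := by
    apply squeeze_zero (fun n => sq_nonneg _)
      (g := fun n => (‖x n - z‖^2 - ‖x (n+1) - z‖^2) / K1)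
    · intro n
      rw [le_div_iff₀ hK1pos]
      have h1 := key1' n
      have h2 : 0 ≤ K2 * ‖x n - W n (t n)‖^2 := mul_nonneg hK2pos.le (sq_nonneg _)
      linarith
    · simpa using hdiff.div_const K1
  -- h → 0
  have hhten : Tendsto (fun n => ‖x n - W n (t n)‖^2) atTop (𝓝 0) := by
    apply squeeze_zero (fun n => sq_nonneg _)
      (g := fun n => (‖x n - z‖^2 - ‖x (n+1) - z‖^2) / K2)
    · intro n
      rw [le_div_iff₀ hK2pos]
      have h1 := key1' n
      have h2 : 0 ≤ K1 * ‖A (x n) - A z‖^2 := mul_nonneg hK1pos.le (sq_nonneg _)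
      linarith
    · simpa using hdiff.div_const K2
  -- ‖A xₙ - A z‖ → 0
  have hrten : Tendsto (fun n => ‖A (x n) - A z‖) atTop (𝓝 0) := by
    have he : (fun n => ‖A (x n) - A z‖) = fun n => Real.sqrt (‖A (x n) - A z‖^2) :=
      funext fun n => (Real.sqrt_sq (norm_nonneg _)).symm
    rw [he]
    simpa using hgten.sqrt
  -- boundedness
  set M : ℝ := ‖x 0 - z‖ with hM
  have hxM : ∀ n, ‖x n - z‖ ≤ M := by
    intro n
    have h1 : ‖x n - z‖^2 ≤ ‖x 0 - z‖^2 := hanti (Nat.zero_le n)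
    nlinarith [norm_nonneg (x n - z), norm_nonneg (x 0 - z)]
  have hM0 : 0 ≤ M := norm_nonneg _
  -- refined estimate (Step E)
  have hE : ∀ n, ‖t n - z‖^2 ≤ ‖x n - z‖^2 - ‖x n - t n‖^2
      + 2*(lam n * ⟪A (x n) - A z, z - t n⟫) := by
    intro n
    have hf : ‖t n - z‖^2 ≤ ⟪(x n - lam n • A (x n)) - (z - lam n • A z), t n - z⟫ := by
      have := stmt6_firm C P hPmem hPchar (x n - lam n • A (x n)) (z - lam n • A z)
      rwa [hzP (lam n) (hlam0 n), ← ht n] at this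
    have e1 : (x n - lam n • A (x n)) - (z - lam n • A z)
        = (x n - z) - lam n • (A (x n) - A z) := by rw [smul_sub]; abel
    rw [e1, inner_sub_left, real_inner_smul_left] at hf
    have e2 : ‖x n - t n‖^2 = ‖x n - z‖^2 - 2*⟪x n - z, t n - z⟫ + ‖t n - z‖^2 := by
      rw [show x n - t n = (x n - z) - (t n - z) from by abel, norm_sub_sq_real]
    have e4 : ⟪A (x n) - A z, z - t n⟫ = -⟪A (x n) - A z, t n - z⟫ := by
      rw [show z - t n = -(t n - z) from by abel, inner_neg_right]
    rw [e4]
    nlinarith [hf, e2]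
  -- master inequality 2
  have key2 : ∀ n, c * ‖x n - t n‖^2
      ≤ (‖x n - z‖^2 - ‖x (n+1) - z‖^2) + (2*b*M) * ‖A (x n) - A z‖ := by
    intro n
    obtain ⟨hαl, hαu⟩ := hαn n
    obtain ⟨hll, hlu⟩ := hlam n
    have hWt2 : ‖W n (t n) - z‖^2 ≤ ‖t n - z‖^2 :=
      pow_le_pow_left₀ (norm_nonneg _) (hWt n) 2
    have hin : ⟪A (x n) - A z, z - t n⟫ ≤ ‖A (x n) - A z‖ * M := by
      have h1 := real_inner_le_norm (A (x n) - A z) (z - t n)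
      have h2 : ‖z - t n‖ ≤ M := by
        rw [norm_sub_rev]; exact (htz n).trans (hxM n)
      calc ⟪A (x n) - A z, z - t n⟫ ≤ ‖A (x n) - A z‖ * ‖z - t n‖ := h1
        _ ≤ ‖A (x n) - A z‖ * M := mul_le_mul_of_nonneg_left h2 (norm_nonneg _)
    have hwM0 : 0 ≤ ‖A (x n) - A z‖ * M := mul_nonneg (norm_nonneg _) hM0
    have hstep : αn n * (lam n * ⟪A (x n) - A z, z - t n⟫) ≤ b * (‖A (x n) - A z‖ * M) := by
      calc αn n * (lam n * ⟪A (x n) - A z, z - t n⟫)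
          ≤ αn n * (lam n * (‖A (x n) - A z‖ * M)) :=
            mul_le_mul_of_nonneg_left (mul_le_mul_of_nonneg_left hin (hlam0 n)) (hαn0 n)
        _ ≤ 1 * (b * (‖A (x n) - A z‖ * M)) := by
            apply mul_le_mul (hαn1 n) (mul_le_mul_of_nonneg_right hlu hwM0)
              (mul_nonneg (hlam0 n) hwM0) zero_le_one
        _ = b * (‖A (x n) - A z‖ * M) := one_mul _
    have hBn := hyb n
    have hDn := hsucc n
    have hEn := hE n
    have hh0' : 0 ≤ (αn n)*(1 - αn n)*‖x n - W n (t n)‖^2 :=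
      mul_nonneg (mul_nonneg (hαn0 n) (by linarith)) (sq_nonneg _)
    have h4 : (αn n) * ‖W n (t n) - z‖^2 ≤ (αn n) * ‖t n - z‖^2 :=
      mul_le_mul_of_nonneg_left hWt2 (hαn0 n)
    have h5 : (αn n) * ‖t n - z‖^2
        ≤ (αn n) * (‖x n - z‖^2 - ‖x n - t n‖^2 + 2*(lam n * ⟪A (x n) - A z, z - t n⟫)) :=
      mul_le_mul_of_nonneg_left hEn (hαn0 n)
    have h6 : c * ‖x n - t n‖^2 ≤ αn n * ‖x n - t n‖^2 :=
      mul_le_mul_of_nonneg_right hαl (sq_nonneg _)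
    linarith [hBn, hDn, h4, h5, h6, hstep, hh0']
  -- e → 0
  have heten : Tendsto (fun n => ‖x n - t n‖^2) atTop (𝓝 0) := by
    have hu : Tendsto (fun n => (‖x n - z‖^2 - ‖x (n+1) - z‖^2)
        + (2*b*M) * ‖A (x n) - A z‖) atTop (𝓝 0) := by
      have h1 : Tendsto (fun n => (2*b*M) * ‖A (x n) - A z‖) atTop (𝓝 0) := by
        simpa using hrten.const_mul (2*b*M)
      simpa using hdiff.add h1
    apply squeeze_zero (fun n => sq_nonneg _)
      (g := fun n => ((‖x n - z‖^2 - ‖x (n+1) - z‖^2) + (2*b*M) * ‖A (x n) - A z‖) / c)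
    · intro n
      rw [le_div_iff₀ hc]
      have := key2 n
      linarith
    · simpa using hu.div_const c
  have htend1 : Tendsto (fun n => ‖x n - t n‖) atTop (𝓝 0) := by
    have he : (fun n => ‖x n - t n‖) = fun n => Real.sqrt (‖x n - t n‖^2) :=
      funext fun n => (Real.sqrt_sq (norm_nonneg _)).symm
    rw [he]
    simpa using heten.sqrt
  refine ⟨htend1, ?_⟩
  have htend2 : Tendsto (fun n => ‖x n - W n (t n)‖) atTop (𝓝 0) := by
    have he : (fun n => ‖x n - W n (t n)‖) = fun n => Real.sqrt (‖x n - W n (t n)‖^2) :=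
      funext fun n => (Real.sqrt_sq (norm_nonneg _)).symm
    rw [he]
    simpa using hhten.sqrt
  apply squeeze_zero (fun n => norm_nonneg _)
    (g := fun n => ‖x n - t n‖ + ‖x n - W n (t n)‖) _ (by simpa using htend1.add htend2)
  intro n
  calc ‖W n (x n) - x n‖
      ≤ ‖W n (x n) - W n (t n)‖ + ‖W n (t n) - x n‖ := by
        rw [show W n (x n) - x n = (W n (x n) - W n (t n)) + (W n (t n) - x n) from by abel]
        exact norm_add_le _ _
    _ ≤ ‖x n - t n‖ + ‖x n - W n (t n)‖ :=
        add_le_add (hWne n _ (hxC n) _ (htC n)) (le_of_eq (norm_sub_rev _ _))
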